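/- Let n > 2 and m > 2 be integers, and let t ≥ 1 be an integer such that 2ᵗ < n ≤ 2^{t+1}. Then the ring 𝕋ₙ(𝔽₂) of n×n upper triangular matrices over 𝔽₂ is m-torsion clean if and only if m = 2^{t+1}. -/

import Mathlib

def AlmostTorsionClean (R : Type*) [Ring R] (m : ℕ) : Prop :=
  ∀ r : R, ∃ u e : R, IsUnit u ∧ u ^ m = 1 ∧ e * e = e ∧ r = u + e

def TorsionClean (R : Type*) [Ring R] (m : ℕ) : Prop :=
  AlmostTorsionClean R m ∧ ∀ k : ℕ, 0 < k → k < m → ¬ AlmostTorsionClean R k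

/-- The ring of n×n upper triangular matrices over 𝔽₂, as a subring of the full matrix ring. -/
def Triangular (n : ℕ) : Subring (Matrix (Fin n) (Fin n) (ZMod 2)) where
  carrier := {A | A.BlockTriangular id}
  zero_mem' := Matrix.blockTriangular_zero
  one_mem' := Matrix.blockTriangular_one
  add_mem' := fun ha hb => ha.add hb
  neg_mem' := fun ha => ha.neg
  mul_mem' := fun ha hb => ha.mul hb

namespace TCaux

variable {n : ℕ}

lemma mem_tri (A : Matrix (Fin n) (Fin n) (ZMod 2)) :
    A ∈ Triangular n ↔ A.BlockTriangular id := Iff.rfl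

lemma strict_pow_entry (A : Matrix (Fin n) (Fin n) (ZMod 2))
    (h : ∀ i j : Fin n, (j : ℕ) ≤ (i : ℕ) → A i j = 0) :
    ∀ (k : ℕ) (i j : Fin n), (j : ℕ) < (i : ℕ) + k → (A ^ k) i j = 0 := by
  intro k
  induction k with
  | zero =>
    intro i j hj
    have hne : i ≠ j := by intro hh; subst hh; omega
    simp [pow_zero, Matrix.one_apply_ne hne]
  | succ k ih =>
    intro i j hj
    rw [pow_succ', Matrix.mul_apply]
    apply Finset.sum_eq_zero
    intro l _
    by_cases hl : (l : ℕ) ≤ (i : ℕ)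
    · rw [h i l hl, zero_mul]
    · rw [ih l j (by omega), mul_zero]

lemma strict_nilpotent (A : Matrix (Fin n) (Fin n) (ZMod 2))
    (h : ∀ i j : Fin n, (j : ℕ) ≤ (i : ℕ) → A i j = 0) {k : ℕ} (hk : n ≤ k) :
    A ^ k = 0 := by
  ext i j
  rw [strict_pow_entry A h k i j (by omega)]
  simp

/-- An element of the triangular subring with zero diagonal is nilpotent. -/
lemma coe_diag_zero_pow (x : Triangular n)
    (hd : ∀ i, (x : Matrix (Fin n) (Fin n) (ZMod 2)) i i = 0) {k : ℕ} (hk : n ≤ k) :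
    x ^ k = 0 := by
  have hstrict : ∀ i j : Fin n, (j : ℕ) ≤ (i : ℕ) →
      (x : Matrix (Fin n) (Fin n) (ZMod 2)) i j = 0 := by
    intro i j hji
    rcases eq_or_lt_of_le hji with hh | hh
    · have : j = i := Fin.ext hh
      subst this; exact hd j
    · exact x.2 (show (id j : Fin n) < id i from hh)
  apply Subtype.ext
  rw [SubmonoidClass.coe_pow]
  simpa using strict_nilpotent _ hstrict hk

lemma char2_pow (hn0 : 0 < n) (x : Triangular n) (k : ℕ) :
    (1 + x) ^ 2 ^ k = 1 + x ^ 2 ^ k := by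
  haveI : NeZero n := ⟨hn0.ne'⟩
  have := add_pow_char_pow_of_commute (R := Triangular n) (p := 2) (n := k)
    (Commute.one_left x)
  simpa using this

/-- An element with diagonal all 1 is a unit whose `2^m`-th power is `1` when `n ≤ 2^m`. -/
lemma unit_of_diag_one (hn0 : 0 < n) (x : Triangular n)
    (hd : ∀ i, (x : Matrix (Fin n) (Fin n) (ZMod 2)) i i = 1) {m : ℕ} (hm : n ≤ 2 ^ m) :
    IsUnit x ∧ x ^ 2 ^ m = 1 := by
  set N : Triangular n := x - 1 with hN
  have hdN : ∀ i, (N : Matrix (Fin n) (Fin n) (ZMod 2)) i i = 0 := by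
    intro i
    have : (N : Matrix (Fin n) (Fin n) (ZMod 2)) =
        (x : Matrix (Fin n) (Fin n) (ZMod 2)) - 1 := rfl
    rw [this, Matrix.sub_apply, hd i, Matrix.one_apply_eq, sub_self]
  have hNpow : N ^ 2 ^ m = 0 := coe_diag_zero_pow N hdN hm
  have hxeq : x = 1 + N := by rw [hN]; abel
  constructor
  · rw [hxeq]
    exact IsNilpotent.isUnit_one_add ⟨2 ^ m, hNpow⟩
  · rw [hxeq, char2_pow hn0, hNpow, add_zero]

/-- Units of the triangular ring have all diagonal entries equal to 1. -/
lemma diag_one_of_isUnit (x : Triangular n) (hx : IsUnit x) :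
    ∀ i, (x : Matrix (Fin n) (Fin n) (ZMod 2)) i i = 1 := by
  intro i
  have h1 : IsUnit (x : Matrix (Fin n) (Fin n) (ZMod 2)) :=
    hx.map (Triangular n).subtype
  rw [Matrix.isUnit_iff_isUnit_det, Matrix.det_of_upperTriangular x.2] at h1
  have hne : (∏ j, (x : Matrix (Fin n) (Fin n) (ZMod 2)) j j) ≠ 0 := h1.ne_zero
  rw [Finset.prod_ne_zero_iff] at hne
  have key : ∀ a : ZMod 2, a ≠ 0 → a = 1 := by decide
  exact key _ (hne i (Finset.mem_univ i))

/-- An idempotent of the triangular ring with diagonal all 1 is 1. -/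
lemma idem_diag_one (hn0 : 0 < n) (e : Triangular n) (he : e * e = e)
    (hd : ∀ i, (e : Matrix (Fin n) (Fin n) (ZMod 2)) i i = 1) : e = 1 := by
  haveI : NeZero n := ⟨hn0.ne'⟩
  set s : Triangular n := e - 1 with hs
  have h2 : (2 : Triangular n) = 0 := by
    have := CharP.cast_eq_zero (Triangular n) 2
    simpa using this
  have hss : s * s = s := by
    have hexp : s * s = e * e - e - e + 1 := by rw [hs]; noncomm_ring
    rw [he] at hexp
    have hsimp : e - e - e + 1 = 1 - e := by abel
    rw [hsimp] at hexp
    have hs' : s = 1 - e := by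
      rw [hs, ← CharTwo.neg_eq (R := Triangular n) (1 - e)]; abel
    rw [hexp, hs']
  have hpow : ∀ k : ℕ, 1 ≤ k → s ^ k = s := by
    intro k hk
    induction k with
    | zero => omega
    | succ k ih =>
      rcases Nat.eq_or_lt_of_le hk with hh | hh
      · simp [← hh]
      · rw [pow_succ, ih (by omega), hss]
  have hdz : ∀ i, (s : Matrix (Fin n) (Fin n) (ZMod 2)) i i = 0 := by
    intro i
    have : (s : Matrix (Fin n) (Fin n) (ZMod 2)) =
        (e : Matrix (Fin n) (Fin n) (ZMod 2)) - 1 := rfl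
    rw [this, Matrix.sub_apply, hd i, Matrix.one_apply_eq, sub_self]
  have hzero : s = 0 := by
    rw [← hpow n hn0]
    exact coe_diag_zero_pow s hdz le_rfl
  have h4 : e - 1 = 0 := by rw [← hs]; exact hzero
  exact sub_eq_zero.mp h4

/-- The shift matrix. -/
def S (n : ℕ) : Matrix (Fin n) (Fin n) (ZMod 2) :=
  Matrix.of fun i j => if (j : ℕ) = (i : ℕ) + 1 then 1 else 0

lemma S_tri : (S n).BlockTriangular id := by
  intro i j hij
  have : (j : ℕ) < (i : ℕ) := hij
  simp only [S, Matrix.of_apply]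
  rw [if_neg (by omega)]

lemma S_pow (m : ℕ) : ∀ i j : Fin n,
    ((S n) ^ m) i j = if (j : ℕ) = (i : ℕ) + m then 1 else 0 := by
  induction m with
  | zero =>
    intro i j
    rw [pow_zero, Matrix.one_apply]
    by_cases h : i = j
    · subst h; simp
    · rw [if_neg h, if_neg (by
        intro hc
        exact h (Fin.ext (by omega)).symm)]
  | succ m ih =>
    intro i j
    rw [pow_succ, Matrix.mul_apply]
    have hterm : ∀ l : Fin n, ((S n) ^ m) i l * (S n) l j =
        if (l : ℕ) = (i : ℕ) + m then (if (j : ℕ) = (l : ℕ) + 1 then 1 else 0) else 0 := by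
      intro l
      rw [ih i l]
      simp only [S, Matrix.of_apply, ite_mul, one_mul, zero_mul]
    rw [Finset.sum_congr rfl (fun l _ => hterm l)]
    by_cases hlt : (i : ℕ) + m < n
    · rw [Finset.sum_eq_single (⟨(i : ℕ) + m, hlt⟩ : Fin n)]
      · rw [if_pos (show ((⟨(i : ℕ) + m, hlt⟩ : Fin n) : ℕ) = (i : ℕ) + m from rfl)]
        by_cases hj : (j : ℕ) = (i : ℕ) + (m + 1)
        · rw [if_pos (show (j : ℕ) = ((⟨(i : ℕ) + m, hlt⟩ : Fin n) : ℕ) + 1 from by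
            simp only [Fin.val_mk]; omega), if_pos hj]
        · rw [if_neg (show ¬ (j : ℕ) = ((⟨(i : ℕ) + m, hlt⟩ : Fin n) : ℕ) + 1 from by
            simp only [Fin.val_mk]; omega), if_neg hj]
      · intro b _ hb
        rw [if_neg (fun hc => hb (Fin.ext (by simpa using hc)))]
      · intro h; exact absurd (Finset.mem_univ _) h
    · rw [Finset.sum_eq_zero (fun l _ => if_neg (by omega))]
      rw [if_neg (by omega)]

lemma S_diag_zero : ∀ i : Fin n, (S n) i i = 0 := by
  intro i
  simp only [S, Matrix.of_apply]
  rw [if_neg (by omega)]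

/-- The witness element of the triangular ring. -/
def w (n : ℕ) : Triangular n := ⟨S n, S_tri⟩

/-- No `k < 2^(t+1)` works. -/
lemma not_almost (t : ℕ) (h1 : 2 ^ t < n) (h2 : n ≤ 2 ^ (t + 1)) {k : ℕ}
    (hk0 : 0 < k) (hk : k < 2 ^ (t + 1)) : ¬ AlmostTorsionClean (Triangular n) k := by
  intro halm
  have hn0 : 0 < n := by
    have := Nat.one_le_two_pow (n := t); omega
  obtain ⟨u, e, hu, huk, hee, hsum⟩ := halm (w n)
  have hud : ∀ i, (u : Matrix (Fin n) (Fin n) (ZMod 2)) i i = 1 := diag_one_of_isUnit u hu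
  -- the idempotent has diagonal all one, hence is 1
  have hed : ∀ i, (e : Matrix (Fin n) (Fin n) (ZMod 2)) i i = 1 := by
    intro i
    have hco : (e : Matrix (Fin n) (Fin n) (ZMod 2)) =
        (S n) - (u : Matrix (Fin n) (Fin n) (ZMod 2)) := by
      have : e = w n - u := by rw [hsum]; abel
      rw [this]; rfl
    rw [hco, Matrix.sub_apply, S_diag_zero i, hud i]
    decide
  have he1 : e = 1 := idem_diag_one hn0 e hee hed
  haveI : NeZero n := ⟨hn0.ne'⟩
  have hueq : u = 1 + w n := by
    have hwe : u = w n - e := by rw [hsum]; abel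
    rw [hwe, he1, CharTwo.sub_eq_add, add_comm]
  -- the witness power vanishing conditions
  have hwd : ∀ i, ((w n : Triangular n) : Matrix (Fin n) (Fin n) (ZMod 2)) i i = 0 :=
    S_diag_zero
  have hw_top : (w n) ^ 2 ^ (t + 1) = 0 := coe_diag_zero_pow (w n) hwd h2
  have hu_top : u ^ 2 ^ (t + 1) = 1 := by
    rw [hueq, char2_pow hn0, hw_top, add_zero]
  -- order considerations
  have hdvd1 : orderOf u ∣ k := orderOf_dvd_of_pow_eq_one huk
  have hdvd2 : orderOf u ∣ 2 ^ (t + 1) := orderOf_dvd_of_pow_eq_one hu_top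
  obtain ⟨s, hs_le, hs_eq⟩ := (Nat.dvd_prime_pow Nat.prime_two).mp hdvd2
  have hst : s ≤ t := by
    by_contra hcon
    have hseq : s = t + 1 := by omega
    rw [hs_eq, hseq] at hdvd1
    have := Nat.le_of_dvd hk0 hdvd1
    omega
  have hdvdt : orderOf u ∣ 2 ^ t := by
    rw [hs_eq]
    exact pow_dvd_pow 2 hst
  have hut : u ^ 2 ^ t = 1 := orderOf_dvd_iff_pow_eq_one.mp hdvdt
  rw [hueq, char2_pow hn0] at hut
  have hwzero : (w n) ^ 2 ^ t = 0 := by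
    have : (1 : Triangular n) + (w n) ^ 2 ^ t = 1 + 0 := by rw [hut, add_zero]
    exact add_left_cancel this
  -- but the shift matrix has nonzero 2^t-th power
  have hcoe : ((S n) ^ 2 ^ t) = 0 := by
    have := congrArg (fun x : Triangular n => (x : Matrix (Fin n) (Fin n) (ZMod 2))) hwzero
    simpa [w, SubmonoidClass.coe_pow] using this
  have hentry := S_pow (n := n) (2 ^ t) ⟨0, hn0⟩ ⟨2 ^ t, h1⟩
  rw [hcoe] at hentry
  simp only [Matrix.zero_apply] at hentry
  rw [if_pos (by simp)] at hentry
  exact one_ne_zero hentry.symm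

/-- `2^(t+1)` works. -/
lemma almost_top (t : ℕ) (hn0 : 0 < n) (h2 : n ≤ 2 ^ (t + 1)) :
    AlmostTorsionClean (Triangular n) (2 ^ (t + 1)) := by
  intro r
  set d : Fin n → ZMod 2 := fun i => 1 - (r : Matrix (Fin n) (Fin n) (ZMod 2)) i i with hd
  set E : Triangular n := ⟨Matrix.diagonal d, Matrix.blockTriangular_diagonal d⟩ with hE
  have hEE : E * E = E := by
    apply Subtype.ext
    show Matrix.diagonal d * Matrix.diagonal d = Matrix.diagonal d
    rw [Matrix.diagonal_mul_diagonal]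
    have key : ∀ a : ZMod 2, a * a = a := by decide
    exact congrArg Matrix.diagonal (funext fun i => key (d i))
  have hdiag : ∀ i, ((r - E : Triangular n) : Matrix (Fin n) (Fin n) (ZMod 2)) i i = 1 := by
    intro i
    have hco : ((r - E : Triangular n) : Matrix (Fin n) (Fin n) (ZMod 2)) =
        (r : Matrix (Fin n) (Fin n) (ZMod 2)) - Matrix.diagonal d := rfl
    have key : ∀ a : ZMod 2, a - (1 - a) = 1 := by decide
    rw [hco, Matrix.sub_apply, Matrix.diagonal_apply_eq, hd]
    exact key _
  obtain ⟨hu, hpow⟩ := unit_of_diag_one hn0 _ hdiag h2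
  exact ⟨r - E, E, hu, hpow, hEE, by abel⟩

end TCaux

theorem Tn_F2_m_torsion_clean_iff_pow (n m t : ℕ) (hn : 2 < n) (hm : 2 < m)
    (ht : 1 ≤ t) (h1 : 2 ^ t < n) (h2 : n ≤ 2 ^ (t + 1)) :
    TorsionClean (Triangular n) m ↔ m = 2 ^ (t + 1) := by
  have hn0 : 0 < n := by omega
  constructor
  · rintro ⟨halm, hmin⟩
    by_contra hne
    rcases lt_or_gt_of_ne hne with hlt | hgt
    · exact TCaux.not_almost t h1 h2 (by omega) hlt halm
    · exact hmin (2 ^ (t + 1)) (Nat.pow_pos (by norm_num)) hgt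
        (TCaux.almost_top t hn0 h2)
  · rintro rfl
    exact ⟨TCaux.almost_top t hn0 h2, fun k hk0 hk => TCaux.not_almost t h1 h2 hk0 hk⟩
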